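/- Let A be an m × n matrix with rational entries that is totally unimodular, and let b be a vector in ℚ^m all of whose entries are integers. Then every extreme point of the polyhedron P = { x ∈ ℚ^n : A x = b and x ≥ 0 (componentwise) } has all entries integer. -/

import Mathlib

open Matrix Finset

private lemma tu_sign_int {q : ℚ} (h : q ∈ Set.range (SignType.cast : SignType → ℚ)) :
    ∃ z : ℤ, q = (z : ℚ) := by
  obtain ⟨σ, hσ⟩ := h
  cases σ
  · exact ⟨0, by simp [← hσ]⟩
  · exact ⟨-1, by simp [← hσ]⟩
  · exact ⟨1, by simp [← hσ]⟩

private lemma tu_aux_rows {m k : ℕ} (M : Matrix (Fin m) (Fin k) ℚ)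
    (h : LinearIndependent ℚ (fun i : Fin k => Mᵀ i)) :
    ∃ f : Fin k → Fin m, Function.Injective f ∧ IsUnit (M.submatrix f id) := by
  have hrk : M.rank = k := by
    have : Mᵀ.rank = Fintype.card (Fin k) := LinearIndependent.rank_matrix (M := Mᵀ) h
    rwa [Matrix.rank_transpose, Fintype.card_fin] at this
  have hspan : Submodule.span ℚ (Set.range M) = ⊤ := by
    apply Submodule.eq_top_of_finrank_eq
    show Module.finrank ℚ (Submodule.span ℚ (Set.range M.row)) = _
    rw [← Matrix.rank_eq_finrank_span_row, hrk, Module.finrank_pi]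
    simp
  obtain ⟨t, hts, hspan', hli⟩ := exists_linearIndependent ℚ (Set.range M)
  rw [hspan] at hspan'
  have bas : Module.Basis t ℚ (Fin k → ℚ) := Module.Basis.mk hli (by rw [Subtype.range_coe, hspan'])
  haveI : Fintype t := FiniteDimensional.fintypeBasisIndex bas
  have hcard : Fintype.card t = k := by
    have := Module.finrank_eq_card_basis bas
    rw [Module.finrank_pi] at this
    simpa using this.symm
  let e : Fin k ≃ t := (Fintype.equivFinOfCardEq hcard).symm
  have hch : ∀ v : t, M (hts v.2).choose = (v : Fin k → ℚ) := fun v => (hts v.2).choose_spec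
  let f : Fin k → Fin m := fun i => (hts (e i).2).choose
  have hMf : ∀ i, M (f i) = ((e i : t) : Fin k → ℚ) := fun i => hch (e i)
  have hfinj : Function.Injective f := by
    intro i i' hii
    have : ((e i : t) : Fin k → ℚ) = ((e i' : t) : Fin k → ℚ) := by
      rw [← hMf, ← hMf, hii]
    exact e.injective (Subtype.ext this)
  refine ⟨f, hfinj, ?_⟩
  rw [← Matrix.linearIndependent_rows_iff_isUnit]
  show LinearIndependent ℚ (fun i => (M.submatrix f id) i)
  have : (fun i => (M.submatrix f id) i) = fun i => ((e i : t) : Fin k → ℚ) := by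
    funext i; exact hMf i
  rw [this]
  exact hli.comp (fun i => e i) (fun a b hab => e.injective hab)

private lemma tu_aux_cramer {k : ℕ} (B : Matrix (Fin k) (Fin k) ℚ)
    (B' : Matrix (Fin k) (Fin k) ℤ)
    (hB : ∀ i j, B i j = ((B' i j : ℤ) : ℚ))
    (v : Fin k → ℚ) (v' : Fin k → ℤ) (hv : ∀ i, v i = ((v' i : ℤ) : ℚ))
    (w : Fin k → ℚ) (hw : B.mulVec w = v) (hdet : B.det = 1 ∨ B.det = -1) :
    ∀ i, ∃ z : ℤ, w i = (z : ℚ) := by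
  have hmap : B = (Int.castRingHom ℚ).mapMatrix B' := by
    ext i j; exact hB i j
  have hadj : B.adjugate = (Int.castRingHom ℚ).mapMatrix B'.adjugate := by
    rw [hmap, RingHom.map_adjugate]
  have key : B.det • w = B.adjugate.mulVec v := by
    rw [← hw, mulVec_mulVec, adjugate_mul, smul_mulVec, one_mulVec]
  intro i
  have hint : ∃ z : ℤ, (B.adjugate.mulVec v) i = (z : ℚ) := by
    refine ⟨∑ j, B'.adjugate i j * v' j, ?_⟩
    simp only [Matrix.mulVec, dotProduct, hadj, RingHom.mapMatrix_apply, Matrix.map_apply,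
      Int.coe_castRingHom]
    push_cast
    exact Finset.sum_congr rfl fun j _ => by rw [hv j]
  obtain ⟨z, hz⟩ := hint
  rcases hdet with h | h
  · refine ⟨z, ?_⟩
    have := congrFun key i
    simp only [h, Pi.smul_apply, smul_eq_mul, one_mul] at this
    rw [this, hz]
  · refine ⟨-z, ?_⟩
    have := congrFun key i
    simp only [h, Pi.smul_apply, smul_eq_mul, neg_one_mul] at this
    push_cast
    rw [← hz, ← this]
    ring_nf

/-- Equality-form integrality: if `A` is totally unimodular and `b` is an integer vector,
then every extreme point of `P = {x : A x = b, x ≥ 0}` has all entries integer. -/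
theorem totallyUnimodular_extreme_point_integral_eq {m n : ℕ}
    (A : Matrix (Fin m) (Fin n) ℚ) (hA : A.IsTotallyUnimodular)
    (b : Fin m → ℚ) (hb : ∀ i : Fin m, ∃ z : ℤ, b i = (z : ℚ))
    (P : Set (Fin n → ℚ)) (hP : P = {x : Fin n → ℚ | A.mulVec x = b ∧ 0 ≤ x})
    (x : Fin n → ℚ)
    (hxP : x ∈ P)
    (hext : ∀ y ∈ P, ∀ z ∈ P, ∀ t : ℚ, 0 < t → t < 1 →
      x = t • y + (1 - t) • z → y = x ∧ z = x) :
    ∀ j : Fin n, ∃ k : ℤ, x j = (k : ℚ) := by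
  classical
  rw [hP] at hxP
  obtain ⟨hxA, hxnn⟩ := hxP
  set s : Finset (Fin n) := Finset.univ.filter (fun j => x j ≠ 0) with hs
  set k := s.card with hk
  set g : Fin k → Fin n := fun i => ((s.orderIsoOfFin hk.symm) i : Fin n) with hg
  have hginj : Function.Injective g := fun a b hab =>
    (s.orderIsoOfFin hk.symm).injective (Subtype.ext hab)
  have hgmem : ∀ i, g i ∈ s := fun i => ((s.orderIsoOfFin hk.symm) i).2
  have hxpos : ∀ j ∈ s, 0 < x j := by
    intro j hj
    rw [hs, Finset.mem_filter] at hj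
    exact lt_of_le_of_ne (hxnn j) (Ne.symm hj.2)
  have hxz : ∀ j, j ∉ s → x j = 0 := by
    intro j hj
    by_contra h
    exact hj (by rw [hs]; simp [h])
  have hsum : ∀ F : Fin n → ℚ, (∀ j ∉ s, F j = 0) →
      (∑ j, F j) = ∑ i : Fin k, F (g i) := by
    intro F hF
    rw [← Finset.sum_subset (Finset.subset_univ s) (fun j _ hj => hF j hj),
      ← Finset.sum_coe_sort s F]
    exact (Fintype.sum_equiv (s.orderIsoOfFin hk.symm).toEquiv (fun i => F (g i))
      (fun a => F a) (fun i => rfl)).symm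
  -- linear independence of support columns
  have hli : LinearIndependent ℚ (fun i : Fin k => (fun r => A r (g i))) := by
    by_contra hdep
    rw [Fintype.not_linearIndependent_iff] at hdep
    obtain ⟨co, hco0, i₀, hi₀⟩ := hdep
    set c : Fin n → ℚ := fun j =>
      if h : j ∈ s then co ((s.orderIsoOfFin hk.symm).symm ⟨j, h⟩) else 0 with hc
    have hcg : ∀ i, c (g i) = co i := by
      intro i
      rw [hc]
      simp only [hgmem i, dif_pos]
      congr 1
      have : (⟨g i, hgmem i⟩ : {a // a ∈ s}) = (s.orderIsoOfFin hk.symm) i := rfl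
      rw [this, OrderIso.symm_apply_apply]
    have hcz : ∀ j ∉ s, c j = 0 := fun j hj => by rw [hc]; simp [hj]
    have hAc : A.mulVec c = 0 := by
      funext r
      have : (∑ j, A r j * c j) = ∑ i : Fin k, A r (g i) * c (g i) :=
        hsum (fun j => A r j * c j)
          (fun j hj => by show A r j * c j = 0; rw [hcz j hj, mul_zero])
      have h2 : (∑ i : Fin k, A r (g i) * c (g i)) = ∑ i : Fin k, co i * A r (g i) := by
        apply Finset.sum_congr rfl
        intro i _
        rw [hcg i, mul_comm]
      have h3 := congrFun hco0 r
      simp only [Finset.sum_apply, Pi.smul_apply, smul_eq_mul, Pi.zero_apply] at h3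
      simp only [Matrix.mulVec, dotProduct, Pi.zero_apply]
      rw [this, h2, h3]
    have hsne : s.Nonempty := ⟨g i₀, hgmem i₀⟩
    set ε : ℚ := s.inf' hsne (fun j => x j / (|c j| + 1)) with hε
    have hεpos : 0 < ε := by
      rw [hε, Finset.lt_inf'_iff]
      intro j hj
      exact div_pos (hxpos j hj) (by positivity)
    have hεle : ∀ j ∈ s, ε * |c j| ≤ x j := by
      intro j hj
      have h1 : ε ≤ x j / (|c j| + 1) := Finset.inf'_le _ hj
      have h2 : ε * |c j| ≤ ε * (|c j| + 1) := by
        apply mul_le_mul_of_nonneg_left (by linarith) hεpos.le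
      have h3 : ε * (|c j| + 1) ≤ x j := by
        rw [← div_mul_cancel₀ (x j) (show (|c j| + 1) ≠ 0 by positivity)]
        exact mul_le_mul_of_nonneg_right h1 (by positivity)
      linarith
    have hmem : ∀ σ : ℚ, |σ| = 1 → x + (σ * ε) • c ∈ P := by
      intro σ hσ
      rw [hP]
      constructor
      · rw [Matrix.mulVec_add, Matrix.mulVec_smul, hAc, smul_zero, add_zero, hxA]
      · intro j
        by_cases hj : j ∈ s
        · have : |σ * ε * c j| ≤ x j := by
            rw [abs_mul, abs_mul, hσ, one_mul, abs_of_pos hεpos]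
            exact hεle j hj
          have h2 := neg_abs_le (σ * ε * c j)
          simp only [Pi.add_apply, Pi.smul_apply, smul_eq_mul, Pi.zero_apply]
          linarith
        · simp only [Pi.add_apply, Pi.smul_apply, smul_eq_mul, Pi.zero_apply]
          rw [hcz j hj, mul_zero, add_zero]
          exact hxnn j
    have hy := hmem 1 (by norm_num)
    have hz := hmem (-1) (by norm_num)
    have hxsum : x = (1/2 : ℚ) • (x + (1 * ε) • c)
        + ((1:ℚ) - 1/2) • (x + ((-1) * ε) • c) := by
      funext j
      simp only [Pi.add_apply, Pi.smul_apply, smul_eq_mul]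
      ring
    obtain ⟨hy', _⟩ := hext _ hy _ hz (1/2) (by norm_num) (by norm_num) hxsum
    have : (1 * ε) • c = 0 := by
      have := congrArg (fun v => v - x) hy'
      simpa [add_sub_cancel_left] using this
    have hc0 : c = 0 := by
      have hεne : (1 * ε) ≠ 0 := by simpa using hεpos.ne'
      exact (smul_eq_zero.mp this).resolve_left hεne
    apply hi₀
    rw [← hcg i₀, hc0]
    rfl
  -- extract invertible square submatrix
  obtain ⟨f, hfinj, hunit⟩ := tu_aux_rows (A.submatrix id g) hli
  set B : Matrix (Fin k) (Fin k) ℚ := A.submatrix f g with hBdef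
  have hunitB : IsUnit B := by
    have : (A.submatrix id g).submatrix f id = B := by
      rw [hBdef, Matrix.submatrix_submatrix]
      rfl
    rwa [this] at hunit
  have hdetne : B.det ≠ 0 := by
    have := (Matrix.isUnit_iff_isUnit_det B).mp hunitB
    exact this.ne_zero
  have hdet : B.det = 1 ∨ B.det = -1 := by
    obtain ⟨σ, hσ⟩ := hA k f g hfinj hginj
    cases σ
    · exfalso; apply hdetne; rw [← hσ]; simp
    · right; rw [← hσ]; simp
    · left; rw [← hσ]; simp
  -- the linear system on the support
  have hBx : B.mulVec (fun i => x (g i)) = fun i => b (f i) := by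
    funext i
    have h1 : (∑ j, A (f i) j * x j) = ∑ i' : Fin k, A (f i) (g i') * x (g i') :=
      hsum (fun j => A (f i) j * x j)
        (fun j hj => by show A (f i) j * x j = 0; rw [hxz j hj, mul_zero])
    have h2 := congrFun hxA (f i)
    simp only [Matrix.mulVec, dotProduct] at h2 ⊢
    show (∑ i' : Fin k, A (f i) (g i') * x (g i')) = b (f i)
    rw [← h1]
    exact h2
  -- integer data
  have hBint : ∀ i j, ∃ z : ℤ, B i j = (z : ℚ) := fun i j =>
    tu_sign_int (hA.apply (f i) (g j))
  choose B' hB' using hBint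
  choose b' hb' using hb
  have hxg : ∀ i, ∃ z : ℤ, x (g i) = (z : ℚ) :=
    tu_aux_cramer B B' hB' (fun i => b (f i)) (fun i => b' (f i))
      (fun i => hb' (f i)) (fun i => x (g i)) hBx hdet
  -- conclude
  intro j
  by_cases hj : j ∈ s
  · obtain ⟨i, hi⟩ : ∃ i, g i = j := by
      refine ⟨(s.orderIsoOfFin hk.symm).symm ⟨j, hj⟩, ?_⟩
      rw [hg]
      simp
    rw [← hi]
    exact hxg i
  · exact ⟨0, by rw [hxz j hj]; simp⟩
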